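/- For a swap permutation matrix P_S (the 2p × 2p permutation matrix that exchanges coordinate j with coordinate j+p for each j in S ⊆ {1,...,p} and fixes all other coordinates), and G = [[Σ, Σ - diag(s)], [Σ - diag(s), Σ]], one has P_S G P_S = G. -/
import Mathlib

open Matrix

/-- The index permutation exchanging `inl j` with `inr j` for `j ∈ S`. -/
def swapIdx {p : ℕ} (S : Finset (Fin p)) : Fin p ⊕ Fin p → Fin p ⊕ Fin p :=
  Sum.elim (fun j => if j ∈ S then Sum.inr j else Sum.inl j)
    (fun j => if j ∈ S then Sum.inl j else Sum.inr j)

/-- The permutation matrix implementing the swap of the pairs `(j, j+p)` for `j ∈ S`. -/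
def swapMatrix {p : ℕ} (S : Finset (Fin p)) : Matrix (Fin p ⊕ Fin p) (Fin p ⊕ Fin p) ℝ :=
  Matrix.of fun i k => if swapIdx S i = k then (1 : ℝ) else 0

lemma swapIdx_invol {p : ℕ} (S : Finset (Fin p)) (x : Fin p ⊕ Fin p) :
    swapIdx S (swapIdx S x) = x := by
  cases x <;> simp only [swapIdx, Sum.elim_inl, Sum.elim_inr] <;> split_ifs <;>
    simp_all [swapIdx]

lemma swapIdx_eq_iff {p : ℕ} (S : Finset (Fin p)) (x y : Fin p ⊕ Fin p) :
    swapIdx S x = y ↔ x = swapIdx S y := by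
  constructor <;> rintro rfl <;> simp [swapIdx_invol]

lemma swap_mul {p : ℕ} (S : Finset (Fin p)) (M : Matrix (Fin p ⊕ Fin p) (Fin p ⊕ Fin p) ℝ) :
    swapMatrix S * M = Matrix.of fun i k => M (swapIdx S i) k := by
  ext i k
  simp [Matrix.mul_apply, swapMatrix, ite_mul, Finset.sum_ite_eq]

lemma mul_swap {p : ℕ} (S : Finset (Fin p)) (M : Matrix (Fin p ⊕ Fin p) (Fin p ⊕ Fin p) ℝ) :
    M * swapMatrix S = Matrix.of fun i k => M i (swapIdx S k) := by
  ext i k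
  simp only [Matrix.mul_apply, swapMatrix, Matrix.of_apply, mul_ite, mul_one, mul_zero,
    swapIdx_eq_iff]
  simp [Finset.sum_ite_eq']

theorem swapMatrix_conj_eq
    {p : ℕ} (S : Finset (Fin p)) (Cov : Matrix (Fin p) (Fin p) ℝ) (s : Fin p → ℝ)
    (hCov : Cov.IsSymm) :
    swapMatrix S * Matrix.fromBlocks Cov (Cov - Matrix.diagonal s)
        (Cov - Matrix.diagonal s) Cov * swapMatrix S
      = Matrix.fromBlocks Cov (Cov - Matrix.diagonal s) (Cov - Matrix.diagonal s) Cov := by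
  rw [mul_swap, swap_mul]
  have key : ∀ a b : Fin p, a ≠ b → (Cov - Matrix.diagonal s) a b = Cov a b := by
    intro a b hab
    simp [Matrix.diagonal_apply_ne _ hab]
  ext i k
  rcases i with a | a <;> rcases k with b | b <;>
    simp only [Matrix.of_apply, swapIdx, Sum.elim_inl, Sum.elim_inr] <;>
    split_ifs with ha hb hb <;>
    simp only [Matrix.fromBlocks_apply₁₁, Matrix.fromBlocks_apply₁₂,
      Matrix.fromBlocks_apply₂₁, Matrix.fromBlocks_apply₂₂] <;>
    first
      | rfl
      | (exact key a b (by rintro rfl; simp_all))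
      | (exact (key a b (by rintro rfl; simp_all)).symm)
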